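/- A Noetherian (t−1)-invertible Λ-module M is finitely generated as an abelian group (i.e., as a ℤ-module) if and only if there exists a polynomial q(t) = Σ_{i=0}^n a_i t^i ∈ Ann(M) with a_n = a_0 = 1. -/

import Mathlib

open Polynomial

/-- `Λ` is the ring `ℤ[t,t⁻¹]` of Laurent polynomials with integer coefficients. -/
abbrev Λ : Type := LaurentPolynomial ℤ

/-- `tL` is the element `t` of `Λ = ℤ[t,t⁻¹]`. -/
noncomputable def tL : Λ := LaurentPolynomial.T 1

section Aux

open LaurentPolynomial

lemma C_eq_algebraMap_int (a : ℤ) : (LaurentPolynomial.C a : Λ) = algebraMap ℤ Λ a :=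
  RingHom.congr_fun (RingHom.ext_int _ _) a

variable {M : Type} [AddCommGroup M] [Module Λ M]

lemma C_smul_eq (a : ℤ) (v : M) : (LaurentPolynomial.C a : Λ) • v = a • v := by
  rw [C_eq_algebraMap_int, algebraMap_smul]

/-- The action of `T j` as a `ℤ`-linear endomorphism. -/
noncomputable def actT (j : ℤ) : Module.End ℤ M :=
  (DistribSMul.toAddMonoidHom M (LaurentPolynomial.T j : Λ)).toIntLinearMap

lemma actT_apply (j : ℤ) (v : M) : actT j v = (LaurentPolynomial.T j : Λ) • v := rfl

lemma actT_pow (j : ℤ) (k : ℕ) (v : M) :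
    ((actT j : Module.End ℤ M) ^ k) v = (LaurentPolynomial.T ((k : ℤ) * j) : Λ) • v := by
  induction k with
  | zero => simp [LaurentPolynomial.T_zero]
  | succ k ih =>
    rw [pow_succ', Module.End.mul_apply, ih, actT_apply, ← mul_smul, ← T_add]
    norm_num
    ring_nf

lemma aeval_actT_apply (j : ℤ) (r : Polynomial ℤ) (v : M) :
    (Polynomial.aeval (actT j : Module.End ℤ M) r) v =
      ∑ i ∈ Finset.range (r.natDegree + 1),
        r.coeff i • ((LaurentPolynomial.T ((i : ℤ) * j) : Λ) • v) := by
  rw [Polynomial.aeval_eq_sum_range, LinearMap.coe_sum, Finset.sum_apply]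
  refine Finset.sum_congr rfl fun i _ => ?_
  rw [LinearMap.smul_apply, actT_pow]

lemma toLaurent_smul_eq (r : Polynomial ℤ) (v : M) :
    (Polynomial.toLaurent r) • v = (Polynomial.aeval (actT 1 : Module.End ℤ M) r) v := by
  induction r using Polynomial.induction_on' with
  | add p q hp hq => rw [map_add, map_add, add_smul, hp, hq, LinearMap.add_apply]
  | monomial i a =>
    rw [Polynomial.toLaurent_C_mul_T, mul_smul, C_smul_eq, Polynomial.aeval_monomial,
      Module.End.mul_apply, Module.algebraMap_end_apply, actT_pow]
    norm_num

lemma toLaurent_smul_sum (r : Polynomial ℤ) (v : M) :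
    (Polynomial.toLaurent r) • v =
      ∑ i ∈ Finset.range (r.natDegree + 1),
        r.coeff i • ((LaurentPolynomial.T (i : ℤ) : Λ) • v) := by
  rw [toLaurent_smul_eq, aeval_actT_apply]
  simp [mul_one]

end Aux

open LaurentPolynomial

/-- A Noetherian (t−1)-invertible Λ-module is finitely generated over ℤ iff its annihilator
contains a polynomial with leading coefficient and constant coefficient equal to 1. -/
theorem finite_over_int_iff (M : Type) [AddCommGroup M] [Module Λ M]
    [IsNoetherian Λ M]
    (hM : Function.Bijective (fun v : M => (tL - 1) • v)) :
    Module.Finite ℤ M ↔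
      ∃ q : Polynomial ℤ, q.Monic ∧ q.coeff 0 = 1 ∧
        ∀ v : M, (Polynomial.toLaurent q) • v = 0 := by
  classical
  constructor
  · intro hfin
    -- `t` acts integrally
    obtain ⟨p, pm, hp0⟩ := Algebra.IsIntegral.isIntegral (R := ℤ) (actT (M := M) 1)
    have hp : Polynomial.aeval (actT (M := M) 1) p = 0 := by rwa [Polynomial.aeval_def]
    have hpv : ∀ v : M, (Polynomial.toLaurent p) • v = 0 := by
      intro v
      rw [toLaurent_smul_eq, hp, LinearMap.zero_apply]
    -- `t⁻¹` acts integrally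
    obtain ⟨s, sm, hs0⟩ := Algebra.IsIntegral.isIntegral (R := ℤ) (actT (M := M) (-1))
    have hsv : Polynomial.aeval (actT (M := M) (-1)) s = 0 := by rwa [Polynomial.aeval_def]
    set m := s.natDegree with hm
    -- the "reverse" of s
    set g : Polynomial ℤ :=
      ∑ i ∈ Finset.range (m + 1), Polynomial.monomial (m - i) (s.coeff i) with hgdef
    have hg0 : g.coeff 0 = 1 := by
      rw [hgdef, Polynomial.finset_sum_coeff]
      rw [Finset.sum_eq_single_of_mem m (Finset.self_mem_range_succ m)]
      · simp [Polynomial.coeff_monomial, ← hm, sm.coeff_natDegree]; exact sm.coeff_natDegree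
      · intro b hb hbne
        rw [Finset.mem_range] at hb
        rw [Polynomial.coeff_monomial, if_neg]
        omega
    have hgdeg : g.degree ≤ (m : WithBot ℕ) := by
      rw [hgdef]
      refine (Polynomial.degree_sum_le _ _).trans (Finset.sup_le fun i _ => ?_)
      exact (Polynomial.degree_monomial_le _ _).trans (by exact_mod_cast Nat.sub_le m i)
    have hgv : ∀ v : M, (Polynomial.toLaurent g) • v = 0 := by
      intro v
      have key : ∀ i ∈ Finset.range (m + 1),
          (Polynomial.toLaurent (Polynomial.monomial (m - i) (s.coeff i))) • v
            = s.coeff i • ((T (m : ℤ) : Λ) • ((actT (M := M) (-1)) ^ i) v) := by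
        intro i hi
        rw [Polynomial.toLaurent_C_mul_T, mul_smul, C_smul_eq, actT_pow, ← mul_smul, ← T_add]
        have : ((m - i : ℕ) : ℤ) = (m : ℤ) + (i : ℤ) * (-1) := by
          have : i ≤ m := by have := Finset.mem_range.mp hi; omega
          push_cast [this]
          ring
        rw [this]
      rw [hgdef, map_sum, Finset.sum_smul, Finset.sum_congr rfl key]
      have := Polynomial.aeval_eq_sum_range (p := s) (actT (M := M) (-1))
      calc ∑ i ∈ Finset.range (m + 1),
            s.coeff i • ((T (m : ℤ) : Λ) • ((actT (M := M) (-1)) ^ i) v)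
          = (T (m : ℤ) : Λ) • ((Polynomial.aeval (actT (M := M) (-1)) s) v) := by
            rw [Polynomial.aeval_eq_sum_range, LinearMap.coe_sum, Finset.sum_apply,
              Finset.smul_sum]
            refine Finset.sum_congr rfl fun i _ => ?_
            rw [LinearMap.smul_apply]
            exact ((actT (M := M) (m : ℤ)).map_smul _ _).symm
        _ = 0 := by rw [hsv, LinearMap.zero_apply, smul_zero]
    -- assemble q
    refine ⟨Polynomial.X ^ (m + 1) * p + g, ?_, ?_, ?_⟩
    · have h1 : (Polynomial.X ^ (m + 1) * p : Polynomial ℤ).Monic :=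
        (Polynomial.monic_X_pow _).mul pm
      refine h1.add_of_left ?_
      have hdeg : (Polynomial.X ^ (m + 1) * p : Polynomial ℤ).degree
          = ((m + 1 + p.natDegree : ℕ) : WithBot ℕ) := by
        rw [Polynomial.degree_eq_natDegree h1.ne_zero,
          Polynomial.natDegree_mul (pow_ne_zero _ Polynomial.X_ne_zero) pm.ne_zero,
          Polynomial.natDegree_X_pow]
      rw [hdeg]
      refine lt_of_le_of_lt hgdeg ?_
      exact_mod_cast (show m < m + 1 + p.natDegree by omega)
    · rw [Polynomial.coeff_add, Polynomial.mul_coeff_zero, Polynomial.coeff_X_pow, hg0]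
      simp
    · intro v
      rw [map_add, map_mul, Polynomial.toLaurent_X_pow, add_smul, mul_smul, hpv, smul_zero,
        hgv, add_zero]
  · rintro ⟨q, qm, q0, hq⟩
    haveI : Module.Finite Λ M := ⟨IsNoetherian.noetherian ⊤⟩
    obtain ⟨sFin, hs⟩ := Module.Finite.fg_top (R := Λ) (M := M)
    obtain ⟨n, hn⟩ : ∃ n, q.natDegree = n := ⟨_, rfl⟩
    by_cases hn0 : n = 0
    · -- q = 1, so M = 0
      have hq1 : q = 1 := by
        have := Polynomial.eq_C_of_natDegree_eq_zero (hn.trans hn0)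
        rw [this, q0, map_one]
      have hzero : ∀ v : M, v = 0 := by
        intro v
        have := hq v
        rwa [hq1, Polynomial.toLaurent_one, one_smul] at this
      refine ⟨⟨∅, ?_⟩⟩
      rw [Finset.coe_empty, Submodule.span_empty, eq_comm]
      rw [Submodule.eq_bot_iff]
      exact fun x _ => hzero x
    · have npos : 0 < n := Nat.pos_of_ne_zero hn0
      set Gfin : Finset M :=
        (Finset.range n ×ˢ sFin).image (fun pr => (T (pr.1 : ℤ) : Λ) • pr.2) with hGfin
      set N : Submodule ℤ M := Submodule.span ℤ (Gfin : Set M) with hNdef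
      have hGen : ∀ i < n, ∀ v ∈ sFin, (T (i : ℤ) : Λ) • v ∈ N := by
        intro i hi v hv
        refine Submodule.subset_span ?_
        rw [hGfin]
        simp only [Finset.coe_image, Set.mem_image, Finset.mem_coe, Finset.mem_product]
        exact ⟨(i, v), ⟨Finset.mem_range.mpr hi, hv⟩, rfl⟩
      -- the basic relation coming from q
      have hrel : ∀ v : M,
          ∑ i ∈ Finset.range (n + 1), q.coeff i • ((T (i : ℤ) : Λ) • v) = 0 := by
        intro v
        have := hq v
        rwa [toLaurent_smul_sum, hn] at this
      have hTn : ∀ v ∈ sFin, (T (n : ℤ) : Λ) • v ∈ N := by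
        intro v hv
        have h := hrel v
        have hlead : q.coeff n = 1 := by rw [← hn]; exact qm.coeff_natDegree
        rw [Finset.sum_range_succ, hlead, one_smul] at h
        have h2 : (T (n : ℤ) : Λ) • v
            = -∑ i ∈ Finset.range n, q.coeff i • ((T (i : ℤ) : Λ) • v) :=
          eq_neg_of_add_eq_zero_right h
        rw [h2]
        exact N.neg_mem (Submodule.sum_mem _ fun i hi =>
          N.smul_mem _ (hGen i (Finset.mem_range.mp hi) v hv))
      have hTneg0 : ∀ v ∈ sFin, (T (-1) : Λ) • v ∈ N := by
        intro v hv
        have h := hrel v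
        rw [Finset.sum_range_succ'] at h
        simp only [Nat.cast_zero, T_zero, one_smul, q0] at h
        -- h : ∑ i ∈ range n, q.coeff (i+1) • (T (i+1) • v) + v = 0
        have h2 : v = -∑ i ∈ Finset.range n, q.coeff (i + 1) • ((T ((i + 1 : ℕ) : ℤ) : Λ) • v) :=
          eq_neg_of_add_eq_zero_right h
        have hterm : ∀ i : ℕ,
            (T (-1) : Λ) • (q.coeff (i + 1) • ((T ((i + 1 : ℕ) : ℤ) : Λ) • v))
              = q.coeff (i + 1) • ((T (i : ℤ) : Λ) • v) := by
          intro i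
          rw [← actT_apply, (actT (M := M) (-1)).map_smul, actT_apply, ← mul_smul, ← T_add]
          have harg : (-1 : ℤ) + ((i + 1 : ℕ) : ℤ) = (i : ℤ) := by push_cast; ring
          rw [harg]
        have h3 : (T (-1) : Λ) • v
            = -∑ i ∈ Finset.range n, q.coeff (i + 1) • ((T (i : ℤ) : Λ) • v) := by
          conv_lhs => rw [h2]
          rw [smul_neg, Finset.smul_sum]
          congr 1
          exact Finset.sum_congr rfl fun i _ => hterm i
        rw [h3]
        exact N.neg_mem (Submodule.sum_mem _ fun i hi =>
          N.smul_mem _ (hGen i (Finset.mem_range.mp hi) v hv))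
      -- N is stable under T 1 and T (-1)
      have hstep : ∀ (w : Λ), (∀ x ∈ (Gfin : Set M), w • x ∈ N) → ∀ x ∈ N, w • x ∈ N := by
        intro w hw x hx
        refine Submodule.span_induction (p := fun x _ => w • x ∈ N) hw ?_ ?_ ?_ hx
        · show w • (0 : M) ∈ N
          rw [smul_zero]; exact N.zero_mem
        · intro a b _ _ ha hb
          show w • (a + b) ∈ N
          rw [smul_add]; exact N.add_mem ha hb
        · intro z a _ ha
          show w • (z • a) ∈ N
          have hz : w • (z • a) = z • (w • a) :=
            map_zsmul (DistribSMul.toAddMonoidHom M w) z a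
          rw [hz]
          exact N.smul_mem z ha
      have hmemG : ∀ x ∈ (Gfin : Set M), ∃ i < n, ∃ v ∈ sFin, x = (T (i : ℤ) : Λ) • v := by
        intro x hx
        rw [hGfin] at hx
        simp only [Finset.coe_image, Set.mem_image, Finset.mem_coe, Finset.mem_product] at hx
        obtain ⟨⟨i, v⟩, ⟨hi, hv⟩, rfl⟩ := hx
        exact ⟨i, Finset.mem_range.mp hi, v, hv, rfl⟩
      have hT1 : ∀ x ∈ N, (T 1 : Λ) • x ∈ N := by
        refine hstep _ ?_
        intro x hx
        obtain ⟨i, hi, v, hv, rfl⟩ := hmemG x hx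
        rw [← mul_smul, ← T_add]
        rcases Nat.lt_or_ge (i + 1) n with h | h
        · have : (1 + (i : ℤ)) = ((i + 1 : ℕ) : ℤ) := by push_cast; ring
          rw [this]
          exact hGen _ h v hv
        · have hieq : i + 1 = n := by omega
          have : (1 + (i : ℤ)) = ((n : ℕ) : ℤ) := by rw [← hieq]; push_cast; ring
          rw [this]
          exact hTn v hv
      have hTm1 : ∀ x ∈ N, (T (-1) : Λ) • x ∈ N := by
        refine hstep _ ?_
        intro x hx
        obtain ⟨i, hi, v, hv, rfl⟩ := hmemG x hx
        rcases Nat.eq_zero_or_pos i with h | h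
        · subst h
          simpa using hTneg0 v hv
        · rw [← mul_smul, ← T_add]
          have : (-1 + (i : ℤ)) = ((i - 1 : ℕ) : ℤ) := by
            have : 1 ≤ i := h
            push_cast [this]
            ring
          rw [this]
          exact hGen _ (by omega) v hv
      have hTj : ∀ (j : ℤ), ∀ x ∈ N, (T j : Λ) • x ∈ N := by
        intro j
        induction j using Int.induction_on with
        | zero => intro x hx; rwa [T_zero, one_smul]
        | succ k ih =>
          intro x hx
          have : ((k : ℤ) + 1) = 1 + (k : ℤ) := by ring
          rw [this, T_add, mul_smul]
          exact hT1 _ (ih x hx)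
        | pred k ih =>
          intro x hx
          have : (-(k : ℤ) - 1) = -1 + -(k : ℤ) := by ring
          rw [this, T_add, mul_smul]
          exact hTm1 _ (ih x hx)
      have hLam : ∀ (f : Λ), ∀ x ∈ N, f • x ∈ N := by
        intro f
        induction f using LaurentPolynomial.induction_on' with
        | add a b ha hb =>
          intro x hx
          rw [add_smul]
          exact N.add_mem (ha x hx) (hb x hx)
        | C_mul_T j a =>
          intro x hx
          rw [mul_smul, C_smul_eq]
          exact N.smul_mem a (hTj j x hx)
      have htop : (⊤ : Submodule ℤ M) ≤ N := by
        intro x _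
        have hxs : x ∈ Submodule.span Λ (sFin : Set M) := by rw [hs]; trivial
        refine Submodule.span_induction (p := fun x _ => x ∈ N) ?_ N.zero_mem ?_ ?_ hxs
        · intro v hv
          have := hGen 0 npos v hv
          rwa [Nat.cast_zero, T_zero, one_smul] at this
        · intro a b _ _ ha hb
          exact N.add_mem ha hb
        · intro f a _ ha
          exact hLam f a ha
      exact ⟨⟨Gfin, top_le_iff.mp htop⟩⟩
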